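/- Let c > 0, λ_b > 0, λ_d ≥ 0, θ ≥ 0 and P_a ∈ [0,1] be real numbers, let C ≥ 1 be a natural number, set κ = λ_d/(λ_b C), and define p(n) = λ_dⁿ (λ_b c)^c Γ(n+c) / ((λ_d + λ_b c)^(n+c) Γ(n+1) Γ(c)) for natural numbers n, where Γ is the real Gamma function. Then Σ_{n=0}^∞ p(n) · (1 − (P_a/C)·θ/(1+θ))ⁿ = (1 + θ·P_a·κ/((1+θ)·c))^(−c). (This is the closed-form denominator of the offloading success probability in Theorem 1 of the paper, obtained from equation (6).) -/

import Mathlib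

open MeasureTheory Real Set

/-- Lebesgue-integral version of the Gamma-function integral. -/
lemma osp_lintegral_gamma (a r : ℝ) (ha : 0 < a) (hr : 0 < r) :
    ∫⁻ x in Ioi (0 : ℝ), ENNReal.ofReal (x ^ (a - 1) * Real.exp (-(r * x))) =
      ENNReal.ofReal ((1 / r) ^ a * Real.Gamma a) := by
  have hmeas : AEStronglyMeasurable (fun x : ℝ ↦ x ^ (a - 1) * Real.exp (-(r * x)))
      (volume.restrict (Ioi 0)) := by
    apply Measurable.aestronglyMeasurable
    fun_prop
  have hnn : 0 ≤ᵐ[volume.restrict (Ioi (0 : ℝ))]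
      fun x : ℝ ↦ x ^ (a - 1) * Real.exp (-(r * x)) := by
    filter_upwards [ae_restrict_mem measurableSet_Ioi] with x hx
    have hx' : (0 : ℝ) < x := hx
    positivity
  have hint : ∫ x in Ioi (0 : ℝ), x ^ (a - 1) * Real.exp (-(r * x)) =
      (1 / r) ^ a * Real.Gamma a := Real.integral_rpow_mul_exp_neg_mul_Ioi ha hr
  have heq := MeasureTheory.integral_eq_lintegral_of_nonneg_ae hnn hmeas
  rw [hint] at heq
  have hpos : 0 < (1 / r) ^ a * Real.Gamma a := by
    have h1 : 0 < (1 / r : ℝ) := by positivity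
    have := Real.Gamma_pos_of_pos ha
    positivity
  have hfin : (∫⁻ x in Ioi (0 : ℝ), ENNReal.ofReal (x ^ (a - 1) * Real.exp (-(r * x)))) ≠ ⊤ := by
    intro h
    rw [h, ENNReal.toReal_top] at heq
    exact absurd heq hpos.ne'
  rw [heq, ENNReal.ofReal_toReal hfin]

/-- The negative binomial series with real exponent. -/
lemma osp_negbinom_tsum (c t : ℝ) (hc : 0 < c) (ht0 : 0 ≤ t) (ht1 : t < 1) :
    ∑' n : ℕ, Real.Gamma (n + c) / (Real.Gamma (n + 1) * Real.Gamma c) * t ^ n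
      = (1 - t) ^ (-c) := by
  set f : ℕ → ℝ := fun n ↦ Real.Gamma (n + c) / (Real.Gamma (n + 1) * Real.Gamma c) * t ^ n
    with hf
  have hΓc : 0 < Real.Gamma c := Real.Gamma_pos_of_pos hc
  have hfnn : ∀ n, 0 ≤ f n := by
    intro n
    have h1 : 0 < Real.Gamma (n + c) := Real.Gamma_pos_of_pos (by positivity)
    have h2 : 0 < Real.Gamma ((n : ℝ) + 1) := Real.Gamma_pos_of_pos (by positivity)
    have : (0:ℝ) ≤ t ^ n := pow_nonneg ht0 n
    positivity
  have h1t : 0 < 1 - t := by linarith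
  -- Step A : the ENNReal sum
  have stepA : ∑' n : ℕ, ENNReal.ofReal (f n) = ENNReal.ofReal ((1 - t) ^ (-c)) := by
    have hterm : ∀ n : ℕ, ENNReal.ofReal (f n) =
        ∫⁻ x in Ioi (0 : ℝ), ENNReal.ofReal (t ^ n / (Real.Gamma (n + 1) * Real.Gamma c)) *
          ENNReal.ofReal (x ^ (((n : ℝ) + c) - 1) * Real.exp (-(1 * x))) := by
      intro n
      have h2 : 0 < Real.Gamma ((n : ℝ) + 1) := Real.Gamma_pos_of_pos (by positivity)
      rw [lintegral_const_mul _ (by fun_prop),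
        osp_lintegral_gamma ((n : ℝ) + c) 1 (by positivity) one_pos,
        ← ENNReal.ofReal_mul (by positivity)]
      congr 1
      rw [hf]
      simp only [one_div, inv_one, Real.one_rpow, one_mul]
      ring
    calc ∑' n : ℕ, ENNReal.ofReal (f n)
        = ∑' n : ℕ, ∫⁻ x in Ioi (0 : ℝ),
            ENNReal.ofReal (t ^ n / (Real.Gamma (n + 1) * Real.Gamma c)) *
            ENNReal.ofReal (x ^ (((n : ℝ) + c) - 1) * Real.exp (-(1 * x))) := by
          exact tsum_congr hterm
      _ = ∫⁻ x in Ioi (0 : ℝ), ∑' n : ℕ,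
            ENNReal.ofReal (t ^ n / (Real.Gamma (n + 1) * Real.Gamma c)) *
            ENNReal.ofReal (x ^ (((n : ℝ) + c) - 1) * Real.exp (-(1 * x))) := by
          rw [lintegral_tsum]
          intro n
          apply Measurable.aemeasurable
          fun_prop
      _ = ∫⁻ x in Ioi (0 : ℝ), ENNReal.ofReal (1 / Real.Gamma c) *
            ENNReal.ofReal (x ^ (c - 1) * Real.exp (-((1 - t) * x))) := by
          apply setLIntegral_congr_fun measurableSet_Ioi
          intro x hx
          have hx' : (0 : ℝ) < x := hx
          have hsum : ∀ n : ℕ,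
              ENNReal.ofReal (t ^ n / (Real.Gamma (n + 1) * Real.Gamma c)) *
                ENNReal.ofReal (x ^ (((n : ℝ) + c) - 1) * Real.exp (-(1 * x))) =
              ENNReal.ofReal ((t * x) ^ n / n.factorial) *
                ENNReal.ofReal (x ^ (c - 1) * Real.exp (-x) / Real.Gamma c) := by
            intro n
            have h2 : Real.Gamma ((n : ℝ) + 1) = n.factorial := by
              exact_mod_cast Real.Gamma_nat_eq_factorial n
            have hx1 : x ^ (((n : ℝ) + c) - 1) = x ^ n * x ^ (c - 1) := by
              rw [show ((n : ℝ) + c) - 1 = (n : ℝ) + (c - 1) by ring,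
                Real.rpow_add hx', Real.rpow_natCast]
            have hfact : (0 : ℝ) < n.factorial := by positivity
            rw [← ENNReal.ofReal_mul (by positivity), ← ENNReal.ofReal_mul (by positivity)]
            congr 1
            rw [hx1, h2, mul_pow]
            field_simp
          beta_reduce
          rw [tsum_congr hsum, ENNReal.tsum_mul_right]
          have hexp : ∑' n : ℕ, ENNReal.ofReal ((t * x) ^ n / n.factorial) =
              ENNReal.ofReal (Real.exp (t * x)) := by
            rw [← ENNReal.ofReal_tsum_of_nonneg (fun n ↦ by positivity)
              (NormedSpace.expSeries_div_summable (t * x))]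
            congr 1
            rw [Real.exp_eq_exp_ℝ]
            exact (NormedSpace.expSeries_div_hasSum_exp (t * x)).tsum_eq
          rw [hexp, ← ENNReal.ofReal_mul (by positivity),
            mul_comm (ENNReal.ofReal (1 / Real.Gamma c)) _,
            ← ENNReal.ofReal_mul (by positivity)]
          congr 1
          rw [show -((1 - t) * x) = t * x + -x by ring, Real.exp_add]
          field_simp
      _ = ENNReal.ofReal (1 / Real.Gamma c) *
            ENNReal.ofReal ((1 / (1 - t)) ^ c * Real.Gamma c) := by
          rw [lintegral_const_mul _ (by fun_prop), osp_lintegral_gamma c (1 - t) hc h1t]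
      _ = ENNReal.ofReal ((1 - t) ^ (-c)) := by
          rw [← ENNReal.ofReal_mul (by positivity)]
          congr 1
          rw [Real.rpow_neg h1t.le, one_div (1-t), Real.inv_rpow h1t.le]
          field_simp
  -- Step B : transfer back to ℝ
  have hS : (∑' n : ℕ, ENNReal.ofReal (f n)) ≠ ⊤ := by
    rw [stepA]; exact ENNReal.ofReal_ne_top
  have hsumm : Summable f := by
    have := ENNReal.summable_toReal hS
    refine this.congr fun n ↦ ?_
    rw [ENNReal.toReal_ofReal (hfnn n)]
  have := ENNReal.ofReal_tsum_of_nonneg hfnn hsumm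
  rw [stepA] at this
  have h0 : 0 ≤ ∑' n, f n := tsum_nonneg hfnn
  have h1 : 0 ≤ (1 - t) ^ (-c) := Real.rpow_nonneg h1t.le _
  exact (ENNReal.ofReal_eq_ofReal_iff h0 h1).mp this

/-- Closed form of the intra-cell interference Laplace transform factor of Theorem 1:
averaging the per-device factor `(1 − (P_a/C)·θ/(1+θ))ⁿ` over the PMF of the number of
devices per cell yields `(1 + θ·P_a·κ/((1+θ)·c))^(−c)` with `κ = λ_d/(λ_b C)`. -/
theorem osp_denominator (c lb ld θ Pa κ : ℝ) (C : ℕ) (hc : 0 < c) (hlb : 0 < lb)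
    (hld : 0 ≤ ld) (hθ : 0 ≤ θ) (hPa0 : 0 ≤ Pa) (hPa1 : Pa ≤ 1) (hC : 1 ≤ C)
    (hκ : κ = ld / (lb * C)) :
    ∑' n : ℕ, (ld ^ n * (lb * c) ^ c * Real.Gamma (n + c) /
        ((ld + lb * c) ^ ((n : ℝ) + c) * Real.Gamma (n + 1) * Real.Gamma c)) *
        (1 - (Pa / C) * θ / (1 + θ)) ^ n
      = (1 + θ * Pa * κ / ((1 + θ) * c)) ^ (-c) := by
  have hC0 : (0 : ℝ) < C := by exact_mod_cast Nat.lt_of_lt_of_le Nat.zero_lt_one hC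
  have hC1 : (1 : ℝ) ≤ C := by exact_mod_cast hC
  set a : ℝ := lb * c with ha
  set A : ℝ := ld + lb * c with hA
  have ha0 : 0 < a := by positivity
  have hA0 : 0 < A := by rw [hA]; positivity
  set ε : ℝ := (Pa / C) * θ / (1 + θ) with hε
  have h1θ : (0 : ℝ) < 1 + θ := by linarith
  have hε0 : 0 ≤ ε := by rw [hε]; positivity
  have hε1 : ε ≤ 1 := by
    rw [hε]
    have h1 : Pa / C ≤ 1 := by
      rw [div_le_one hC0]; linarith
    have h2 : θ / (1 + θ) ≤ 1 := by
      rw [div_le_one h1θ]; linarith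
    calc Pa / C * θ / (1 + θ) = (Pa / C) * (θ / (1 + θ)) := by ring
      _ ≤ 1 * 1 := mul_le_mul h1 h2 (by positivity) (by linarith)
      _ = 1 := one_mul 1
  set x : ℝ := 1 - ε with hx
  have hx0 : 0 ≤ x := by rw [hx]; linarith
  have hx1 : x ≤ 1 := by rw [hx]; linarith
  set t : ℝ := ld * x / A with ht
  have ht0 : 0 ≤ t := by rw [ht]; positivity
  have ht1 : t < 1 := by
    rw [ht, div_lt_one hA0, hA]
    nlinarith
  have hΓc : 0 < Real.Gamma c := Real.Gamma_pos_of_pos hc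
  have hterm : ∀ n : ℕ,
      (ld ^ n * (lb * c) ^ c * Real.Gamma (n + c) /
        ((ld + lb * c) ^ ((n : ℝ) + c) * Real.Gamma (n + 1) * Real.Gamma c)) *
        (1 - (Pa / C) * θ / (1 + θ)) ^ n
      = (a / A) ^ c * (Real.Gamma (n + c) / (Real.Gamma (n + 1) * Real.Gamma c) * t ^ n) := by
    intro n
    have h2 : 0 < Real.Gamma ((n : ℝ) + 1) := Real.Gamma_pos_of_pos (by positivity)
    have hApow : (ld + lb * c) ^ ((n : ℝ) + c) = A ^ n * A ^ c := by
      rw [← hA, Real.rpow_add hA0, Real.rpow_natCast]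
    have hAc : 0 < A ^ c := Real.rpow_pos_of_pos hA0 c
    have hAn : 0 < (A : ℝ) ^ n := pow_pos hA0 n
    have hdiv : (a / A) ^ c = a ^ c / A ^ c := Real.div_rpow ha0.le hA0.le c
    rw [hApow, hdiv, ← ha, ht, div_pow, mul_pow, ← hε, ← hx]
    field_simp
  rw [tsum_congr hterm, tsum_mul_left, osp_negbinom_tsum c t hc ht0 ht1]
  -- now pure algebra
  set B : ℝ := a + ld * ε with hB
  have hB0 : 0 < B := by rw [hB]; positivity
  have h1t : 1 - t = B / A := by
    rw [ht, hB, hx, hA, ha]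
    field_simp
    ring
  have hbase : 1 + θ * Pa * κ / ((1 + θ) * c) = B / a := by
    rw [hB, hε, hκ, ha]
    field_simp
  rw [h1t, hbase]
  have e1 : (B / a) ^ (-c) = (a / B) ^ c := by
    rw [Real.rpow_neg (by positivity), ← Real.inv_rpow (by positivity), inv_div]
  have e2 : (B / A) ^ (-c) = (A / B) ^ c := by
    rw [Real.rpow_neg (by positivity), ← Real.inv_rpow (by positivity), inv_div]
  rw [e1, e2, ← Real.mul_rpow (by positivity) (by positivity)]
  congr 1
  field_simp
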